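/- Let α > 0 and let F₁ and F₂ be cumulative distribution functions of non-negative absolutely continuous random variables, each differentiable on (0, +∞) with derivatives f₁ and f₂ respectively, each satisfying 0 < F_i(x) < 1 for all x > 0 and lim_{x→0⁺} F_i(x) = 0. If the α-generalized reversed aging intensity functions of F₁ and F₂ coincide, i.e., α x F₁(x)^{α−1} f₁(x)/(1 − F₁(x)^α) = α x F₂(x)^{α−1} f₂(x)/(1 − F₂(x)^α) for all x > 0, then F₁(x) = F₂(x) for all x > 0. -/

import Mathlib

open Set Filter Real

/-- For `α > 0`, the α-generalized reversed aging intensity function characterizes the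
distribution uniquely: if two cdfs `F₁`, `F₂` of non-negative absolutely continuous
random variables have the same α-generalized reversed aging intensity on `(0,∞)`,
then `F₁ = F₂` on `(0,∞)`. -/
theorem stmt_8 (α : ℝ) (hα : 0 < α) (F₁ f₁ F₂ f₂ : ℝ → ℝ)
    (hm₁ : Monotone F₁) (hm₂ : Monotone F₂)
    (hd₁ : ∀ x ∈ Set.Ioi (0:ℝ), HasDerivAt F₁ (f₁ x) x)
    (hd₂ : ∀ x ∈ Set.Ioi (0:ℝ), HasDerivAt F₂ (f₂ x) x)
    (hF₁ : ∀ x ∈ Set.Ioi (0:ℝ), 0 < F₁ x ∧ F₁ x < 1)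
    (hF₂ : ∀ x ∈ Set.Ioi (0:ℝ), 0 < F₂ x ∧ F₂ x < 1)
    (hfi₁ : ∀ u v : ℝ, 0 < u → 0 < v → IntervalIntegrable f₁ MeasureTheory.volume u v)
    (hfi₂ : ∀ u v : ℝ, 0 < u → 0 < v → IntervalIntegrable f₂ MeasureTheory.volume u v)
    (h0₁ : Filter.Tendsto F₁ (nhdsWithin (0:ℝ) (Set.Ioi 0)) (nhds 0))
    (h0₂ : Filter.Tendsto F₂ (nhdsWithin (0:ℝ) (Set.Ioi 0)) (nhds 0))
    (heq : ∀ x > (0:ℝ),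
      α * x * F₁ x ^ (α - 1) * f₁ x / (1 - F₁ x ^ α) =
      α * x * F₂ x ^ (α - 1) * f₂ x / (1 - F₂ x ^ α)) :
    ∀ x > (0:ℝ), F₁ x = F₂ x := by
  have hG₁ : ∀ x ∈ Set.Ioi (0:ℝ), 0 < 1 - F₁ x ^ α := by
    intro x hx
    have h := hF₁ x hx
    have : F₁ x ^ α < 1 := Real.rpow_lt_one h.1.le h.2 hα
    linarith
  have hG₂ : ∀ x ∈ Set.Ioi (0:ℝ), 0 < 1 - F₂ x ^ α := by
    intro x hx
    have h := hF₂ x hx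
    have : F₂ x ^ α < 1 := Real.rpow_lt_one h.1.le h.2 hα
    linarith
  set H : ℝ → ℝ := fun y => Real.log (1 - F₁ y ^ α) - Real.log (1 - F₂ y ^ α) with hHdef
  have hH : ∀ x ∈ Set.Ioi (0:ℝ), HasDerivAt H 0 x := by
    intro x hx
    have hx0 : (0:ℝ) < x := hx
    have h1 : HasDerivAt (fun y => Real.log (1 - F₁ y ^ α))
        (-(f₁ x * α * F₁ x ^ (α - 1)) / (1 - F₁ x ^ α)) x := by
      have hr : HasDerivAt (fun y => F₁ y ^ α) (f₁ x * α * F₁ x ^ (α - 1)) x :=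
        (hd₁ x hx).rpow_const (Or.inl (hF₁ x hx).1.ne')
      exact (hr.const_sub 1).log (hG₁ x hx).ne'
    have h2 : HasDerivAt (fun y => Real.log (1 - F₂ y ^ α))
        (-(f₂ x * α * F₂ x ^ (α - 1)) / (1 - F₂ x ^ α)) x := by
      have hr : HasDerivAt (fun y => F₂ y ^ α) (f₂ x * α * F₂ x ^ (α - 1)) x :=
        (hd₂ x hx).rpow_const (Or.inl (hF₂ x hx).1.ne')
      exact (hr.const_sub 1).log (hG₂ x hx).ne'
    have key : f₁ x * α * F₁ x ^ (α - 1) / (1 - F₁ x ^ α)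
        = f₂ x * α * F₂ x ^ (α - 1) / (1 - F₂ x ^ α) := by
      have h := heq x hx0
      have e1 : α * x * F₁ x ^ (α - 1) * f₁ x / (1 - F₁ x ^ α)
          = x * (f₁ x * α * F₁ x ^ (α - 1) / (1 - F₁ x ^ α)) := by ring
      have e2 : α * x * F₂ x ^ (α - 1) * f₂ x / (1 - F₂ x ^ α)
          = x * (f₂ x * α * F₂ x ^ (α - 1) / (1 - F₂ x ^ α)) := by ring
      rw [e1, e2] at h
      exact mul_left_cancel₀ hx0.ne' h
    have := h1.sub h2
    have hz : -(f₁ x * α * F₁ x ^ (α - 1)) / (1 - F₁ x ^ α)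
        - -(f₂ x * α * F₂ x ^ (α - 1)) / (1 - F₂ x ^ α) = 0 := by
      rw [neg_div, neg_div]
      rw [key]; ring
    rw [hz] at this
    exact this
  have hconst : ∀ x y : ℝ, 0 < x → x ≤ y → H y = H x := by
    intro x y hx hxy
    have hsub : Icc x y ⊆ Set.Ioi (0:ℝ) := fun t ht => lt_of_lt_of_le hx ht.1
    have hcont : ContinuousOn H (Icc x y) := fun t ht =>
      (hH t (hsub ht)).continuousAt.continuousWithinAt
    have hder : ∀ t ∈ Ico x y, HasDerivWithinAt H 0 (Ici t) t := fun t ht =>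
      (hH t (hsub ⟨ht.1, ht.2.le⟩)).hasDerivWithinAt
    exact constant_of_has_deriv_right_zero hcont hder y (right_mem_Icc.mpr hxy)
  have hH0 : ∀ x > (0:ℝ), H x = 0 := by
    intro x hx
    have hlim1 : Tendsto (fun y => Real.log (1 - F₁ y ^ α)) (nhdsWithin 0 (Set.Ioi 0)) (nhds 0) := by
      have h1 : Tendsto (fun y => F₁ y ^ α) (nhdsWithin 0 (Set.Ioi 0)) (nhds 0) := by
        have := (Real.continuousAt_rpow_const 0 α (Or.inr hα.le)).tendsto.comp h0₁
        simpa [Function.comp_def, Real.zero_rpow hα.ne'] using this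
      have h2 : Tendsto (fun y => 1 - F₁ y ^ α) (nhdsWithin 0 (Set.Ioi 0)) (nhds 1) := by
        simpa using (tendsto_const_nhds.sub h1)
      have := (Real.continuousAt_log one_ne_zero).tendsto.comp h2
      simpa [Function.comp_def] using this
    have hlim2 : Tendsto (fun y => Real.log (1 - F₂ y ^ α)) (nhdsWithin 0 (Set.Ioi 0)) (nhds 0) := by
      have h1 : Tendsto (fun y => F₂ y ^ α) (nhdsWithin 0 (Set.Ioi 0)) (nhds 0) := by
        have := (Real.continuousAt_rpow_const 0 α (Or.inr hα.le)).tendsto.comp h0₂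
        simpa [Function.comp_def, Real.zero_rpow hα.ne'] using this
      have h2 : Tendsto (fun y => 1 - F₂ y ^ α) (nhdsWithin 0 (Set.Ioi 0)) (nhds 1) := by
        simpa using (tendsto_const_nhds.sub h1)
      have := (Real.continuousAt_log one_ne_zero).tendsto.comp h2
      simpa [Function.comp_def] using this
    have hlimH : Tendsto H (nhdsWithin 0 (Set.Ioi 0)) (nhds 0) := by
      simpa using hlim1.sub hlim2
    have hev : ∀ᶠ y in nhdsWithin (0:ℝ) (Set.Ioi 0), H y = H x := by
      filter_upwards [Ioo_mem_nhdsGT_of_mem (Set.left_mem_Ico.mpr hx)] with y hy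
      exact (hconst y x hy.1 hy.2.le).symm
    have hlimH' : Tendsto H (nhdsWithin 0 (Set.Ioi 0)) (nhds (H x)) :=
      Tendsto.congr' (hev.mono fun y h => h.symm) tendsto_const_nhds
    exact tendsto_nhds_unique hlimH' hlimH
  intro x hx
  have h0 := hH0 x hx
  have hlog : Real.log (1 - F₁ x ^ α) = Real.log (1 - F₂ x ^ α) := by
    simp only [hHdef] at h0; linarith
  have hGeq : 1 - F₁ x ^ α = 1 - F₂ x ^ α := by
    have := congrArg Real.exp hlog
    rwa [Real.exp_log (hG₁ x hx), Real.exp_log (hG₂ x hx)] at this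
  have hpow : F₁ x ^ α = F₂ x ^ α := by linarith
  exact Real.rpow_left_injOn hα.ne' (hF₁ x hx).1.le (hF₂ x hx).1.le hpow
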